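/- Let G be a connected finite simple graph and let H be a finite simple graph. If there exists an injective map φ : V(H) → V(G) such that the superposition F = G ⊕_φ H is edge 2-connected, then p(G) ≤ |V(H)|, where p(G) denotes the number of pendant biconnected components of G. -/

import Mathlib

open SimpleGraph

/-- The superposition `G ⊕_φ H` of `G` and `H` with respect to an injective map
`φ : V(H) ↪ V(G)`. -/
def superpose {α β : Type*} (G : SimpleGraph α) (H : SimpleGraph β) (φ : β ↪ α) :
    SimpleGraph α :=
  G ⊔ SimpleGraph.map φ H

/-- A graph is edge 2-connected if it is connected and has no bridge. -/
def TwoEdgeConnected {α : Type*} (G : SimpleGraph α) : Prop :=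
  G.Connected ∧ ∀ e : Sym2 α, ¬ G.IsBridge e

/-- The graph obtained from `G` by deleting all its bridges; its connected
components are the biconnected components of `G`. -/
def bicompGraph {α : Type*} (G : SimpleGraph α) : SimpleGraph α :=
  G.deleteEdges {e | G.IsBridge e}

/-- A biconnected component `C` of `G` is pendant if exactly one bridge of `G` has an
endpoint in `C`. -/
def IsPendant {α : Type*} (G : SimpleGraph α)
    (C : (bicompGraph G).ConnectedComponent) : Prop :=
  ∃! e : Sym2 α, G.IsBridge e ∧ ∃ v ∈ C.supp, v ∈ e

/-- `p(G)`: the number of pendant biconnected components of `G`. -/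
noncomputable def numPendant {α : Type*} (G : SimpleGraph α) : ℕ :=
  {C : (bicompGraph G).ConnectedComponent | IsPendant G C}.ncard

/-- Let `G` be connected. If there is an injective `φ : V(H) ↪ V(G)` such that
`F = G ⊕_φ H` is edge 2-connected, then `p(G) ≤ |V(H)|`. -/
lemma reach_closed {α : Type*} {G : SimpleGraph α} {P : α → Prop}
    (h : ∀ x y, G.Adj x y → P x → P y) {u v : α} (r : G.Reachable u v) (hu : P u) : P v := by
  obtain ⟨w⟩ := r
  induction w with
  | nil => exact hu
  | cons a _ ih => exact ih (h _ _ a hu)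

theorem stmt9 {α β : Type*} [Fintype α] [Fintype β]
    (G : SimpleGraph α) (hG : G.Connected) (H : SimpleGraph β)
    (h : ∃ φ : β ↪ α, TwoEdgeConnected (superpose G H φ)) :
    numPendant G ≤ Fintype.card β := by
  classical
  obtain ⟨φ, hFconn, hFbr⟩ := h
  have key : ∀ C : (bicompGraph G).ConnectedComponent, IsPendant G C → ∃ b, φ b ∈ C.supp := by
    intro C hC
    by_contra hno
    push_neg at hno
    obtain ⟨e, ⟨hbr, v, hvC, hve⟩, huniq⟩ := hC
    obtain ⟨w, rfl⟩ := Sym2.mem_iff_exists.mp hve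
    rw [isBridge_iff] at hbr
    refine hFbr s(v, w) ?_
    rw [isBridge_iff]
    refine fun r => ?_
    -- every step in F minus the bridge stays in C.supp
    have step : ∀ x y, ((superpose G H φ) \ fromEdgeSet {s(v, w)}).Adj x y →
        x ∈ C.supp → y ∈ C.supp := by
      intro x y hxy hx
      obtain ⟨hF, hne⟩ := hxy
      have hxyne : s(x, y) ≠ s(v, w) := by
        intro hh
        exact hne (by simp [hh, hF.ne])
      rcases hF with hGxy | hH
      · by_cases hb : G.IsBridge s(x, y)
        · exact absurd (huniq s(x, y) ⟨hb, x, hx, Sym2.mem_mk_left x y⟩) hxyne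
        · have hadj : (bicompGraph G).Adj x y := by
            rw [bicompGraph, deleteEdges_adj]
            exact ⟨hGxy, hb⟩
          rw [ConnectedComponent.mem_supp_iff] at hx ⊢
          rw [← hx]
          exact (ConnectedComponent.connectedComponentMk_eq_of_adj hadj).symm
      · obtain ⟨-, a, b, -, rfl, -⟩ := hH
        exact absurd hx (hno a)
    have hw : w ∈ C.supp := reach_closed step r hvC
    -- but then v and w are connected in G minus the bridge
    refine hbr ?_
    have hvw : (bicompGraph G).Reachable v w := by
      rw [ConnectedComponent.mem_supp_iff] at hvC hw
      exact ConnectedComponent.exact (hvC.trans hw.symm)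
    refine hvw.mono ?_
    intro x y hxy
    rw [bicompGraph, deleteEdges_adj] at hxy
    refine ⟨hxy.1, fun hc => ?_⟩
    rw [fromEdgeSet_adj] at hc
    exact hxy.2 (hc.1 ▸ isBridge_iff.mpr hbr)
  by_cases hne : {C : (bicompGraph G).ConnectedComponent | IsPendant G C}.Nonempty
  · obtain ⟨C0, hC0⟩ := hne
    obtain ⟨b0, -⟩ := key C0 hC0
    haveI : Nonempty β := ⟨b0⟩
    have hle := Set.ncard_le_ncard_of_injOn (s := {C : (bicompGraph G).ConnectedComponent | IsPendant G C})
      (fun C : (bicompGraph G).ConnectedComponent => if h : ∃ b, φ b ∈ C.supp then h.choose else Classical.arbitrary β)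
      (fun C _ => Set.mem_univ _) ?_ Set.finite_univ
    · calc numPendant G ≤ (Set.univ : Set β).ncard := hle
        _ = Fintype.card β := by rw [Set.ncard_univ, Nat.card_eq_fintype_card]
    · intro C1 h1 C2 h2 heq
      have e1 := key C1 h1
      have e2 := key C2 h2
      simp only [dif_pos e1, dif_pos e2] at heq
      have m1 := e1.choose_spec
      have m2 := e2.choose_spec
      rw [heq] at m1
      rw [ConnectedComponent.mem_supp_iff] at m1 m2
      exact m1.symm.trans m2
  · rw [Set.not_nonempty_iff_eq_empty] at hne
    simp [numPendant, hne]
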